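/- Let p be a prime, k ≥ 1, and let T = [[1,1],[0,1]] ∈ GL₂(ℤ/p^kℤ), an element of order p^k. There exists an element of GL₂(ℤ/p^{k+1}ℤ) of order p^k whose entrywise reduction modulo p^k equals T if and only if p ∈ {2,3} and k = 1. -/
import Mathlib


open scoped MatrixGroups

/-- The matrix `T = [[1,1],[0,1]]` as an element of `GL₂(R)`. -/
def glT (R : Type*) [CommRing R] : GL (Fin 2) R :=
  ⟨!![1, 1; 0, 1], !![1, -1; 0, 1],
    by ext i j; fin_cases i <;> fin_cases j <;> norm_num [Matrix.mul_apply, Fin.sum_univ_two],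
    by ext i j; fin_cases i <;> fin_cases j <;> norm_num [Matrix.mul_apply, Fin.sum_univ_two]⟩

/-- The reduction map `GL₂(ℤ/nℤ) → GL₂(ℤ/mℤ)` for `m ∣ n`, induced by entrywise reduction. -/
def glRedZMod {m n : ℕ} (h : m ∣ n) : GL (Fin 2) (ZMod n) →* GL (Fin 2) (ZMod m) :=
  Units.map ((ZMod.castHom h (ZMod m)).mapMatrix).toMonoidHom


lemma glT_pow_val (R : Type*) [CommRing R] (n : ℕ) :
    (((glT R) ^ n : GL (Fin 2) R) : Matrix (Fin 2) (Fin 2) R) = !![1, (n : R); 0, 1] := by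
  induction n with
  | zero => simp [Matrix.one_fin_two]
  | succ n ih =>
    rw [pow_succ, Units.val_mul, ih]
    ext i j
    fin_cases i <;> fin_cases j <;>
      simp [glT, Matrix.mul_apply, Fin.sum_univ_two] <;> ring

lemma glT_pow_eq_one_iff (N : ℕ) [NeZero N] (n : ℕ) :
    (glT (ZMod N)) ^ n = 1 ↔ N ∣ n := by
  rw [Units.ext_iff, glT_pow_val, Units.val_one]
  constructor
  · intro h
    have h01 := congrFun (congrFun h 0) 1
    simp [Matrix.one_fin_two] at h01
    exact (ZMod.natCast_eq_zero_iff n N).1 h01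
  · intro h
    have : (n : ZMod N) = 0 := (ZMod.natCast_eq_zero_iff n N).2 h
    rw [this, Matrix.one_fin_two]

lemma orderOf_glT (N : ℕ) [NeZero N] : orderOf (glT (ZMod N)) = N :=
  Nat.dvd_antisymm
    (orderOf_dvd_of_pow_eq_one ((glT_pow_eq_one_iff N N).2 dvd_rfl))
    ((glT_pow_eq_one_iff N _).1 (pow_orderOf_eq_one _))

def g2 : GL (Fin 2) (ZMod (2 ^ (1 + 1))) :=
  ⟨!![3, 1; 0, 1], !![3, 1; 0, 1], by decide, by decide⟩

def g3 : GL (Fin 2) (ZMod (3 ^ (1 + 1))) :=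
  ⟨!![1, 1; 6, 1], !![7, 2; 3, 7], by decide, by decide⟩

lemma g2_order : orderOf g2 = 2 ^ 1 := by
  have h : g2 ^ 2 = 1 := by rw [Units.ext_iff]; decide
  have h1 : g2 ≠ 1 := by rw [Ne, Units.ext_iff]; decide
  haveI : Fact (Nat.Prime 2) := ⟨Nat.prime_two⟩
  rw [pow_one]; exact orderOf_eq_prime h h1

lemma g3_order : orderOf g3 = 3 ^ 1 := by
  have h : g3 ^ 3 = 1 := by rw [Units.ext_iff]; decide
  have h1 : g3 ≠ 1 := by rw [Ne, Units.ext_iff]; decide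
  haveI : Fact (Nat.Prime 3) := ⟨Nat.prime_three⟩
  rw [pow_one]; exact orderOf_eq_prime h h1

lemma g2_red : glRedZMod (pow_dvd_pow 2 (Nat.le_succ 1)) g2 = glT (ZMod (2 ^ 1)) := by
  rw [Units.ext_iff]
  show ((ZMod.castHom (pow_dvd_pow 2 (Nat.le_succ 1)) (ZMod (2 ^ 1))).mapMatrix) _ = _
  decide

lemma g3_red : glRedZMod (pow_dvd_pow 3 (Nat.le_succ 1)) g3 = glT (ZMod (3 ^ 1)) := by
  rw [Units.ext_iff]
  show ((ZMod.castHom (pow_dvd_pow 3 (Nat.le_succ 1)) (ZMod (3 ^ 1))).mapMatrix) _ = _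
  decide

lemma matrix_mul_natCast {R : Type*} [CommRing R] (c : ℕ) (X : Matrix (Fin 2) (Fin 2) R) :
    X * (c : Matrix (Fin 2) (Fin 2) R) = ((c : R)) • X := by
  rw [← (Nat.cast_commute (c : ℕ) X).eq, ← nsmul_eq_mul, Nat.cast_smul_eq_nsmul]

lemma zmod_lift_zero {p k : ℕ} [NeZero (p ^ (k + 1))] (x : ZMod (p ^ (k + 1)))
    (hx : ZMod.castHom (pow_dvd_pow p (Nat.le_succ k)) (ZMod (p ^ k)) x = 0) :
    ∃ y, x = ((p ^ k : ℕ) : ZMod (p ^ (k + 1))) * y := by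
  have hv : ((x.val : ℕ) : ZMod (p ^ (k + 1))) = x := ZMod.natCast_zmod_val x
  rw [← hv, map_natCast, ZMod.natCast_eq_zero_iff] at hx
  obtain ⟨c, hc⟩ := hx
  exact ⟨(c : _), by rw [← hv, hc, Nat.cast_mul]⟩

lemma forward_aux (p k : ℕ) (hp : p.Prime) (hk : 1 ≤ k)
    (g : GL (Fin 2) (ZMod (p ^ (k + 1))))
    (hord : orderOf g = p ^ k)
    (hred : glRedZMod (pow_dvd_pow p (Nat.le_succ k)) g = glT (ZMod (p ^ k))) :
    (p = 2 ∨ p = 3) ∧ k = 1 := by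
  by_contra H
  haveI : NeZero (p ^ (k + 1)) := ⟨pow_ne_zero _ hp.pos.ne'⟩
  set q : ZMod (p ^ (k + 1)) := ((p ^ k : ℕ) : ZMod (p ^ (k + 1))) with hqdef
  have hq0 : q ≠ 0 := by
    rw [hqdef, Ne, ZMod.natCast_eq_zero_iff]
    intro hdvd
    exact absurd ((Nat.pow_dvd_pow_iff_le_right hp.one_lt).mp hdvd) (by omega)
  have hq2 : q * q = 0 := by
    rw [hqdef, ← Nat.cast_mul, ZMod.natCast_eq_zero_iff, ← pow_add]
    exact pow_dvd_pow p (by omega)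
  have hqp : q * (p : ZMod (p ^ (k + 1))) = 0 := by
    rw [hqdef, ← Nat.cast_mul, ZMod.natCast_eq_zero_iff, ← pow_succ]
  have hkone : ∀ a, 2 ≤ a → a ^ k = a → k = 1 := by
    intro a ha hak
    by_contra hk1
    have h2k : 2 ≤ k := by omega
    have h1 := Nat.pow_le_pow_right (show 1 ≤ a by omega) h2k
    rw [hak] at h1
    nlinarith [h1, ha]
  have hpk23 : p ^ k ≠ 2 ∧ p ^ k ≠ 3 := by
    constructor <;> intro hpk <;> apply H
    · have hp2 : p = 2 :=
        (Nat.prime_dvd_prime_iff_eq hp Nat.prime_two).1 (hpk ▸ dvd_pow_self p (by omega))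
      subst hp2
      exact ⟨Or.inl rfl, hkone 2 (by norm_num) hpk⟩
    · have hp3 : p = 3 :=
        (Nat.prime_dvd_prime_iff_eq hp Nat.prime_three).1 (hpk ▸ dvd_pow_self p (by omega))
      subst hp3
      exact ⟨Or.inr rfl, hkone 3 (by norm_num) hpk⟩
  -- the matrix of g
  have hmap : (↑g : Matrix (Fin 2) (Fin 2) (ZMod (p ^ (k + 1)))).map
      (ZMod.castHom (pow_dvd_pow p (Nat.le_succ k)) (ZMod (p ^ k))) = !![1, 1; 0, 1] := by
    have h := congrArg Units.val hred
    simpa [glRedZMod, glT, RingHom.mapMatrix_apply] using h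
  have hTcast : ∀ i j, (ZMod.castHom (pow_dvd_pow p (Nat.le_succ k)) (ZMod (p ^ k)))
      ((!![1, 1; 0, 1] : Matrix (Fin 2) (Fin 2) (ZMod (p ^ (k + 1)))) i j)
      = (!![1, 1; 0, 1] : Matrix (Fin 2) (Fin 2) (ZMod (p ^ k))) i j := by
    intro i j
    fin_cases i <;> fin_cases j <;>
      simp only [Matrix.cons_val', Matrix.cons_val_zero, Matrix.empty_val',
        Matrix.cons_val_fin_one, Matrix.cons_val_one, Matrix.head_cons,
        Matrix.head_fin_const] <;>
      first | exact map_one _ | exact map_zero _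
  have hent : ∀ i j, ∃ y, (↑g : Matrix (Fin 2) (Fin 2) (ZMod (p ^ (k + 1)))) i j
      = (!![1, 1; 0, 1] : Matrix (Fin 2) (Fin 2) (ZMod (p ^ (k + 1)))) i j + q * y := by
    intro i j
    obtain ⟨y, hy⟩ := zmod_lift_zero
      ((↑g : Matrix (Fin 2) (Fin 2) (ZMod (p ^ (k + 1)))) i j - !![1, 1; 0, 1] i j) (by
        rw [map_sub, hTcast]
        have h2 : (ZMod.castHom (pow_dvd_pow p (Nat.le_succ k)) (ZMod (p ^ k)))
            ((↑g : Matrix (Fin 2) (Fin 2) (ZMod (p ^ (k + 1)))) i j)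
            = ((↑g : Matrix (Fin 2) (Fin 2) (ZMod (p ^ (k + 1)))).map
              (ZMod.castHom (pow_dvd_pow p (Nat.le_succ k)) (ZMod (p ^ k)))) i j := rfl
        rw [h2, hmap, sub_self])
    exact ⟨y, by linear_combination hy⟩
  choose A' hA using hent
  set A : Matrix (Fin 2) (Fin 2) (ZMod (p ^ (k + 1))) := Matrix.of A' with hAdef
  have hGA : (↑g : Matrix (Fin 2) (Fin 2) (ZMod (p ^ (k + 1)))) = !![1, 1; 0, 1] + q • A := by
    ext i j
    exact hA i j
  set N : Matrix (Fin 2) (Fin 2) (ZMod (p ^ (k + 1))) := !![0, 1; 0, 0] with hNdef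
  set n : Matrix (Fin 2) (Fin 2) (ZMod (p ^ (k + 1))) := N + q • A with hndef
  have hsplit : (!![1, 1; 0, 1] : Matrix (Fin 2) (Fin 2) (ZMod (p ^ (k + 1)))) = 1 + N := by
    ext i j; fin_cases i <;> fin_cases j <;> simp [hNdef, Matrix.one_fin_two]
  have hGn : (↑g : Matrix (Fin 2) (Fin 2) (ZMod (p ^ (k + 1)))) = 1 + n := by
    rw [hGA, hsplit, hndef, add_assoc]
  have hN2 : N * N = 0 := by
    ext i j; fin_cases i <;> fin_cases j <;>
      simp [hNdef, Matrix.mul_apply, Fin.sum_univ_two]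
  have hn2 : n ^ 2 = q • (N * A + A * N) := by
    rw [pow_two, hndef, add_mul, mul_add, mul_add, hN2, mul_smul_comm, smul_mul_assoc,
      smul_mul_assoc, mul_smul_comm, smul_smul, hq2, zero_smul, smul_add]
    abel
  have hn4 : n ^ 2 * n ^ 2 = 0 := by
    rw [hn2, smul_mul_assoc, mul_smul_comm, smul_smul, hq2, zero_smul]
  clear_value q A N n
  -- the group-theoretic hypothesis
  have hg : g ^ (p ^ k) = 1 := by rw [← hord]; exact pow_orderOf_eq_one g
  have hGpow : (↑g : Matrix (Fin 2) (Fin 2) (ZMod (p ^ (k + 1)))) ^ (p ^ k) = 1 := by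
    rw [← Units.val_pow_eq_pow_val, hg, Units.val_one]
  -- binomial expansion
  have hbin := (Commute.one_right n).add_pow (p ^ k)
  have hm2 : 2 ≤ p ^ k := by
    calc 2 ≤ p := hp.two_le
    _ = p ^ 1 := (pow_one p).symm
    _ ≤ p ^ k := Nat.pow_le_pow_right hp.pos hk
  have hzero : ∀ j ∈ Finset.Ico 2 (p ^ k + 1),
      n ^ j * (1 : Matrix (Fin 2) (Fin 2) (ZMod (p ^ (k + 1)))) ^ (p ^ k - j)
        * ((p ^ k).choose j : Matrix (Fin 2) (Fin 2) (ZMod (p ^ (k + 1)))) = 0 := by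
    intro j hj
    rw [Finset.mem_Ico] at hj
    rw [one_pow, mul_one, matrix_mul_natCast]
    by_cases hj4 : 4 ≤ j
    · rw [show j = 2 + 2 + (j - 4) by omega, pow_add n (2+2) (j-4), pow_add n 2 2, hn4, zero_mul, smul_zero]
    · have hCdvd : p ∣ (p ^ k).choose j := by
        refine hp.dvd_choose_pow (by omega) (fun hjp => ?_)
        omega
      obtain ⟨c, hc⟩ := hCdvd
      rw [hc, Nat.cast_mul, show j = 2 + (j - 2) by omega, pow_add n 2 (j-2), hn2,
        smul_mul_assoc, smul_smul]
      have hz : ((p : ZMod (p ^ (k + 1))) * (c : ZMod (p ^ (k + 1)))) * q = 0 := by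
        linear_combination (c : ZMod (p ^ (k + 1))) * hqp
      rw [hz, zero_smul]
  have hsum : ∑ j ∈ Finset.range (p ^ k + 1),
      n ^ j * (1 : Matrix (Fin 2) (Fin 2) (ZMod (p ^ (k + 1)))) ^ (p ^ k - j)
        * ((p ^ k).choose j : Matrix (Fin 2) (Fin 2) (ZMod (p ^ (k + 1)))) = 1 + q • N := by
    rw [Finset.range_eq_Ico,
      ← Finset.sum_Ico_consecutive _ (by norm_num : (0:ℕ) ≤ 2) (by omega : 2 ≤ p ^ k + 1),
      Finset.sum_eq_zero hzero, add_zero, ← Finset.range_eq_Ico, Finset.sum_range_succ,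
      Finset.sum_range_one]
    simp only [pow_zero, pow_one, one_pow, mul_one, one_mul, Nat.choose_zero_right,
      Nat.choose_one_right, Nat.cast_one]
    rw [matrix_mul_natCast, ← hqdef, hndef, smul_add, smul_smul, hq2, zero_smul, add_zero]
  have hfin : (1 : Matrix (Fin 2) (Fin 2) (ZMod (p ^ (k + 1)))) = 1 + q • N := by
    calc (1 : Matrix (Fin 2) (Fin 2) (ZMod (p ^ (k + 1))))
        = (↑g : Matrix (Fin 2) (Fin 2) (ZMod (p ^ (k + 1)))) ^ (p ^ k) := hGpow.symm
      _ = (n + 1) ^ (p ^ k) := by rw [hGn, add_comm 1 n]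
      _ = _ := hbin
      _ = 1 + q • N := hsum
  have hNzero : q • N = 0 := left_eq_add.mp hfin
  have hq : q = 0 := by
    have h01 := congrFun (congrFun hNzero 0) 1
    simpa [hNdef, Matrix.smul_apply, smul_eq_mul] using h01
  exact hq0 hq


theorem statement_13 (p k : ℕ) (hp : p.Prime) (hk : 1 ≤ k) :
    orderOf (glT (ZMod (p ^ k))) = p ^ k ∧
    ((∃ g : GL (Fin 2) (ZMod (p ^ (k + 1))),
        orderOf g = p ^ k ∧
        glRedZMod (pow_dvd_pow p (Nat.le_succ k)) g = glT (ZMod (p ^ k))) ↔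
      ((p = 2 ∨ p = 3) ∧ k = 1)) := by
  haveI : NeZero (p ^ k) := ⟨pow_ne_zero _ hp.pos.ne'⟩
  refine ⟨orderOf_glT _, ?_, ?_⟩
  · rintro ⟨g, hord, hred⟩
    exact forward_aux p k hp hk g hord hred
  · rintro ⟨hp23, rfl⟩
    rcases hp23 with rfl | rfl
    · exact ⟨g2, g2_order, g2_red⟩
    · exact ⟨g3, g3_order, g3_red⟩
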